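/- Let $v_2$ be an integer with $v_2 > 18$ and $3 \nmid v_2$, let $a_j \in \mathbb{C}$ for integers $j$ with $-\lfloor v_2/3 \rfloor - 3 \le j \le -4$, and define $\varphi_1 = T^6$ and $\varphi_2 = T^9 + T^{v_2 - 9} + \sum_{j = -\lfloor v_2/3 \rfloor - 3}^{-4} a_j T^{2 v_2 + 3j}$ in $\mathbb{C}[[T]]$. Let $\Lambda$ be the value set of differentials of $(\varphi_1, \varphi_2)$. Then $v_2 - 3$, $v_2 + 3$, $2v_2 - 3$ and $2v_2 + 3$ all belong to $\Lambda$, and none of them belongs to $\langle 6, 9, v_2 \rangle$. -/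

import Mathlib

open PowerSeries

/-- Substitution of two one-variable power series (with zero constant term) into a
two-variable power series, defined coefficientwise. -/
noncomputable def sub2 (φ₁ φ₂ : PowerSeries ℂ) (h : MvPowerSeries (Fin 2) ℂ) :
    PowerSeries ℂ :=
  PowerSeries.mk fun n =>
    ∑ p ∈ Finset.range (n + 1) ×ˢ Finset.range (n + 1),
      MvPowerSeries.coeff (Finsupp.single 0 p.1 + Finsupp.single 1 p.2) h *
        PowerSeries.coeff n (φ₁ ^ p.1 * φ₂ ^ p.2)

/-- The value semigroup of a parameterization `(φ₁, φ₂)`. -/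
noncomputable def valueSemigroup (φ₁ φ₂ : PowerSeries ℂ) : Set ℕ :=
  {n : ℕ | ∃ h : MvPowerSeries (Fin 2) ℂ,
    sub2 φ₁ φ₂ h ≠ 0 ∧ (sub2 φ₁ φ₂ h).order = (n : ℕ∞)}

/-- The value set of differentials of a parameterization `(φ₁, φ₂)`. -/
noncomputable def diffValues (φ₁ φ₂ : PowerSeries ℂ) : Set ℕ :=
  {n : ℕ | ∃ A B : MvPowerSeries (Fin 2) ℂ,
    sub2 φ₁ φ₂ A * derivativeFun φ₁ + sub2 φ₁ φ₂ B * derivativeFun φ₂ ≠ 0 ∧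
    (sub2 φ₁ φ₂ A * derivativeFun φ₁ + sub2 φ₁ φ₂ B * derivativeFun φ₂).order + 1
      = (n : ℕ∞)}


lemma derivativeFun_X_pow (k : ℕ) :
    derivativeFun ((X : PowerSeries ℂ) ^ k) = C (k : ℂ) * X ^ (k - 1) := by
  ext n
  rw [show derivativeFun ((X : PowerSeries ℂ) ^ k) = d⁄dX ℂ (X ^ k) from rfl,
    coeff_derivative, coeff_C_mul, coeff_X_pow, coeff_X_pow]
  rcases k with _ | k
  · simp
  · simp only [Nat.add_sub_cancel]
    by_cases h : n = k
    · subst h; simp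
    · rw [if_neg (by omega), if_neg h, zero_mul, mul_zero]

lemma derivativeFun_C_mul (c : ℂ) (f : PowerSeries ℂ) :
    derivativeFun (C c * f) = C c * derivativeFun f := by
  rw [← smul_eq_C_mul, derivativeFun_smul, smul_eq_C_mul]

lemma derivativeFun_sum {α : Type*} (s : Finset α) (f : α → PowerSeries ℂ) :
    derivativeFun (∑ i ∈ s, f i) = ∑ i ∈ s, derivativeFun (f i) := by
  classical
  induction s using Finset.induction with
  | empty => simp [show (derivativeFun (0 : PowerSeries ℂ)) = 0 by
      exact map_zero (derivative ℂ)]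
  | insert _ _ h ih => rw [Finset.sum_insert h, Finset.sum_insert h, derivativeFun_add, ih]

lemma sub2_add (φ₁ φ₂ : PowerSeries ℂ) (g h : MvPowerSeries (Fin 2) ℂ) :
    sub2 φ₁ φ₂ (g + h) = sub2 φ₁ φ₂ g + sub2 φ₁ φ₂ h := by
  ext n
  simp [sub2, Finset.sum_add_distrib, add_mul]

lemma sub2_monomial (φ₁ φ₂ : PowerSeries ℂ) (h₁ : constantCoeff φ₁ = 0)
    (h₂ : constantCoeff φ₂ = 0) (c : ℂ) (p q : ℕ) :
    sub2 φ₁ φ₂ (MvPowerSeries.monomial (Finsupp.single 0 p + Finsupp.single 1 q) c)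
      = C c * (φ₁ ^ p * φ₂ ^ q) := by
  classical
  have key : ∀ u v : ℕ, (Finsupp.single (0 : Fin 2) u + Finsupp.single 1 v
      = Finsupp.single 0 p + Finsupp.single 1 q) ↔ (u = p ∧ v = q) := by
    intro u v
    constructor
    · intro heq
      have h0 := DFunLike.congr_fun heq (0 : Fin 2)
      have h1 := DFunLike.congr_fun heq (1 : Fin 2)
      simp [Finsupp.single_apply] at h0 h1
      exact ⟨h0, h1⟩
    · rintro ⟨rfl, rfl⟩; rfl
  have hdvd : ∀ n, ¬(p ≤ n ∧ q ≤ n) → coeff n (φ₁ ^ p * φ₂ ^ q) = 0 := by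
    intro n hn
    have hX : (X : PowerSeries ℂ) ^ (p + q) ∣ φ₁ ^ p * φ₂ ^ q := by
      rw [pow_add]
      exact mul_dvd_mul (pow_dvd_pow_of_dvd (X_dvd_iff.2 h₁) p)
        (pow_dvd_pow_of_dvd (X_dvd_iff.2 h₂) q)
    exact X_pow_dvd_iff.1 hX n (by omega)
  ext n
  rw [sub2, coeff_mk, coeff_C_mul]
  by_cases hn : p ≤ n ∧ q ≤ n
  · rw [Finset.sum_eq_single (p, q)]
    · rw [MvPowerSeries.coeff_monomial_same]
    · intro b _ hbne
      rw [MvPowerSeries.coeff_monomial_ne, zero_mul]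
      intro heq
      exact hbne (Prod.ext ((key b.1 b.2).1 heq).1 ((key b.1 b.2).1 heq).2)
    · intro hmem
      exfalso
      exact hmem (by simp [Finset.mem_product]; omega)
  · rw [hdvd n hn, mul_zero]
    apply Finset.sum_eq_zero
    intro b hb
    by_cases hbpq : b = (p, q)
    · subst hbpq
      rw [hdvd n hn, mul_zero]
    · rw [MvPowerSeries.coeff_monomial_ne, zero_mul]
      intro heq
      exact hbpq (Prod.ext ((key b.1 b.2).1 heq).1 ((key b.1 b.2).1 heq).2)

/-- For the normal-form parameterization
`(T⁶, T⁹ + T^{v₂-9} + ∑_{j=-⌊v₂/3⌋-3}^{-4} aⱼ T^{2v₂+3j})` with `v₂ > 18`, `3 ∤ v₂`,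
the values `v₂-3`, `v₂+3`, `2v₂-3`, `2v₂+3` all belong to `Λ` and none of them
belongs to `⟨6, 9, v₂⟩`. -/
theorem four_differential_values_6_9_v2 (v2 : ℕ) (h18 : 18 < v2) (h3 : ¬ (3 ∣ v2))
    (a : ℤ → ℂ) (φ₁ φ₂ : PowerSeries ℂ)
    (hφ₁ : φ₁ = PowerSeries.X ^ 6)
    (hφ₂ : φ₂ = PowerSeries.X ^ 9 + PowerSeries.X ^ (v2 - 9) +
      ∑ j ∈ Finset.Icc (-((v2 / 3 : ℕ) : ℤ) - 3) (-4),
        PowerSeries.C (a j) * PowerSeries.X ^ (2 * (v2 : ℤ) + 3 * j).toNat) :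
    (v2 - 3 ∈ diffValues φ₁ φ₂ ∧ v2 + 3 ∈ diffValues φ₁ φ₂ ∧
      2 * v2 - 3 ∈ diffValues φ₁ φ₂ ∧ 2 * v2 + 3 ∈ diffValues φ₁ φ₂) ∧
    (v2 - 3 ∉ AddSubmonoid.closure ({6, 9, v2} : Set ℕ) ∧
      v2 + 3 ∉ AddSubmonoid.closure ({6, 9, v2} : Set ℕ) ∧
      2 * v2 - 3 ∉ AddSubmonoid.closure ({6, 9, v2} : Set ℕ) ∧
      2 * v2 + 3 ∉ AddSubmonoid.closure ({6, 9, v2} : Set ℕ)) := by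
  constructor
  · -- membership part
    obtain ⟨m, rfl⟩ : ∃ m, v2 = m + 19 := ⟨v2 - 19, by omega⟩
    set J : Finset ℤ := Finset.Icc (-(((m + 19) / 3 : ℕ) : ℤ) - 3) (-4) with hJ
    set nn : ℤ → ℕ := fun j => (2 * ((m + 19 : ℕ) : ℤ) + 3 * j).toNat with hnn
    have hbound : ∀ j ∈ J, m + 11 ≤ nn j := by
      intro j hj
      rw [hJ, Finset.mem_Icc] at hj
      simp only [hnn]
      omega
    set S : PowerSeries ℂ := ∑ j ∈ J, C (a j) * X ^ nn j with hS
    rw [show m + 19 - 9 = m + 10 from by omega] at hφ₂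
    have hφ₂' : φ₂ = X ^ 9 + X ^ (m + 10) + S := hφ₂
    have hφ₁' : φ₁ = X ^ 6 := hφ₁
    -- derivative computations
    have hd1 : derivativeFun φ₁ = C 6 * X ^ 5 := by
      rw [hφ₁', derivativeFun_X_pow]; norm_num
    have hdS : derivativeFun S = ∑ j ∈ J, C (a j) * (C ((nn j : ℕ) : ℂ) * X ^ (nn j - 1)) := by
      rw [hS, derivativeFun_sum]
      exact Finset.sum_congr rfl fun j hj => by rw [derivativeFun_C_mul, derivativeFun_X_pow]
    have hd2 : derivativeFun φ₂ =
        C 9 * X ^ 8 + C ((m + 10 : ℕ) : ℂ) * X ^ (m + 9) + derivativeFun S := by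
      rw [hφ₂', derivativeFun_add, derivativeFun_add, derivativeFun_X_pow, derivativeFun_X_pow]
      norm_num
    -- divisibility of the tail
    have hXS : (X : PowerSeries ℂ) ^ (m + 11) ∣ S := by
      apply Finset.dvd_sum
      intro j hj
      exact Dvd.dvd.mul_left (pow_dvd_pow X (hbound j hj)) _
    have hXdS : (X : PowerSeries ℂ) ^ (m + 10) ∣ derivativeFun S := by
      rw [hdS]
      apply Finset.dvd_sum
      intro j hj
      exact Dvd.dvd.mul_left (Dvd.dvd.mul_left (pow_dvd_pow X (by have := hbound j hj; omega)) _) _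
    -- constant coefficients vanish
    have hc1 : constantCoeff φ₁ = 0 := by rw [hφ₁']; simp [constantCoeff_X]
    have hcS : constantCoeff S = 0 := by
      have := X_pow_dvd_iff.1 (dvd_trans (pow_dvd_pow (X : PowerSeries ℂ)
        (by omega : 1 ≤ m + 11)) hXS) 0 (by omega)
      simpa using this
    have hc2 : constantCoeff φ₂ = 0 := by
      rw [hφ₂']
      simp [map_add, hcS, constantCoeff_X, zero_pow]
    -- the basic 1-form pullback and its closed form
    set c₀ : ℂ := 18 - 2 * ((m + 10 : ℕ) : ℂ) with hc₀
    have hc₀ne : c₀ ≠ 0 := by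
      intro h
      rw [hc₀] at h
      push_cast at h
      have : ((2 * m + 2 : ℕ) : ℂ) = ((0 : ℕ) : ℂ) := by push_cast; linear_combination -h
      have := Nat.cast_injective (R := ℂ) this
      omega
    set R : PowerSeries ℂ := C 18 * X ^ 5 * S + C (-2) * X ^ 6 * derivativeFun S with hR
    have hXR : (X : PowerSeries ℂ) ^ (m + 16) ∣ R := by
      apply dvd_add
      · have h5 : (X : PowerSeries ℂ) ^ (m + 16) ∣ X ^ 5 * S := by
          rw [show m + 16 = 5 + (m + 11) from by omega, pow_add]
          exact mul_dvd_mul_left _ hXS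
        rw [mul_assoc]
        exact h5.mul_left _
      · have h6 : (X : PowerSeries ℂ) ^ (m + 16) ∣ X ^ 6 * derivativeFun S := by
          rw [show m + 16 = 6 + (m + 10) from by omega, pow_add]
          exact mul_dvd_mul_left _ hXdS
        rw [mul_assoc]
        exact h6.mul_left _
    set W : PowerSeries ℂ := C c₀ * X ^ (m + 15) + R with hW
    have hω : C 3 * φ₂ * derivativeFun φ₁ + C (-2) * φ₁ * derivativeFun φ₂ = W := by
      rw [hW, hd1, hd2, hφ₁', hφ₂', hR, hc₀]
      simp only [map_sub, map_mul, map_neg, map_ofNat]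
      ring
    have hcoeffW : ∀ i : ℕ, i ≤ m + 15 →
        coeff i W = if i = m + 15 then c₀ else 0 := by
      intro i hi
      rw [hW, map_add, coeff_C_mul, coeff_X_pow,
        X_pow_dvd_iff.1 hXR i (by omega), add_zero]
      split_ifs <;> simp
    have hordW : W.order = ((m + 15 : ℕ) : ℕ∞) := by
      rw [order_eq_nat]
      constructor
      · rw [hcoeffW _ le_rfl, if_pos rfl]; exact hc₀ne
      · intro i hi
        rw [hcoeffW _ (by omega), if_neg (by omega)]
    have hWne : W ≠ 0 := by
      intro h0
      have := hcoeffW (m + 15) le_rfl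
      rw [h0, if_pos rfl, map_zero] at this
      exact hc₀ne this.symm
    -- the function h = X₂² - X₁³ pulled back
    set E : PowerSeries ℂ := X ^ (2 * m + 20) + S ^ 2 + C 2 * X ^ 9 * S
        + C 2 * X ^ (m + 10) * S with hE
    have hH : φ₂ ^ 2 - φ₁ ^ 3 = C 2 * X ^ (m + 19) + E := by
      rw [hφ₁', hφ₂', hE]
      simp only [map_ofNat]
      ring
    have hXE : (X : PowerSeries ℂ) ^ (m + 20) ∣ E := by
      rw [hE]
      refine dvd_add (dvd_add (dvd_add ?_ ?_) ?_) ?_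
      · exact pow_dvd_pow _ (by omega)
      · refine dvd_trans (pow_dvd_pow (X : PowerSeries ℂ) (by omega : m + 20 ≤ (m + 11) * 2)) ?_
        rw [pow_mul]
        exact pow_dvd_pow_of_dvd hXS 2
      · have : (X : PowerSeries ℂ) ^ (m + 20) ∣ X ^ 9 * S := by
          rw [show m + 20 = 9 + (m + 11) from by omega, pow_add]
          exact mul_dvd_mul_left _ hXS
        rw [mul_assoc]
        exact this.mul_left _
      · have : (X : PowerSeries ℂ) ^ (m + 20) ∣ X ^ (m + 10) * S := by
          refine dvd_trans (pow_dvd_pow (X : PowerSeries ℂ)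
            (by omega : m + 20 ≤ (m + 10) + (m + 11))) ?_
          rw [pow_add]
          exact mul_dvd_mul_left _ hXS
        rw [mul_assoc]
        exact this.mul_left _
    set H : PowerSeries ℂ := C 2 * X ^ (m + 19) + E with hHdef
    have hcoeffH : ∀ i : ℕ, i ≤ m + 19 →
        coeff i H = if i = m + 19 then 2 else 0 := by
      intro i hi
      rw [hHdef, map_add, coeff_C_mul, coeff_X_pow,
        X_pow_dvd_iff.1 hXE i (by omega), add_zero]
      split_ifs <;> simp
    have hordH : H.order = ((m + 19 : ℕ) : ℕ∞) := by
      rw [order_eq_nat]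
      constructor
      · rw [hcoeffH _ le_rfl, if_pos rfl]; norm_num
      · intro i hi
        rw [hcoeffH _ (by omega), if_neg (by omega)]
    have hHne : H ≠ 0 := by
      intro h0
      have := hcoeffH (m + 19) le_rfl
      rw [h0, if_pos rfl, map_zero] at this
      norm_num at this
    have hordX6 : ((X : PowerSeries ℂ) ^ 6).order = ((6 : ℕ) : ℕ∞) := by
      simp [order_X_pow]
    have hX6ne : (X : PowerSeries ℂ) ^ 6 ≠ 0 := pow_ne_zero _ X_ne_zero
    refine ⟨?_, ?_, ?_, ?_⟩
    · -- v2 - 3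
      refine ⟨MvPowerSeries.monomial (Finsupp.single 0 0 + Finsupp.single 1 1) 3,
        MvPowerSeries.monomial (Finsupp.single 0 1 + Finsupp.single 1 0) (-2), ?_, ?_⟩ <;>
        rw [sub2_monomial _ _ hc1 hc2, sub2_monomial _ _ hc1 hc2] <;>
        simp only [pow_zero, pow_one, one_mul, mul_one] <;>
        rw [hω]
      · exact hWne
      · rw [hordW, show m + 19 - 3 = m + 16 from by omega]
        norm_cast <;> omega
    · -- v2 + 3
      refine ⟨MvPowerSeries.monomial (Finsupp.single 0 1 + Finsupp.single 1 1) 3,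
        MvPowerSeries.monomial (Finsupp.single 0 2 + Finsupp.single 1 0) (-2), ?_, ?_⟩ <;>
        rw [sub2_monomial _ _ hc1 hc2, sub2_monomial _ _ hc1 hc2,
          show C 3 * (φ₁ ^ 1 * φ₂ ^ 1) * derivativeFun φ₁
              + C (-2) * (φ₁ ^ 2 * φ₂ ^ 0) * derivativeFun φ₂
            = φ₁ * (C 3 * φ₂ * derivativeFun φ₁ + C (-2) * φ₁ * derivativeFun φ₂)
            from by ring, hω, hφ₁']
      · exact mul_ne_zero hX6ne hWne
      · rw [order_mul, hordW, hordX6]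
        norm_cast <;> omega
    · -- 2 * v2 - 3
      refine ⟨MvPowerSeries.monomial (Finsupp.single 0 0 + Finsupp.single 1 3) 3
          + MvPowerSeries.monomial (Finsupp.single 0 3 + Finsupp.single 1 1) (-3),
        MvPowerSeries.monomial (Finsupp.single 0 1 + Finsupp.single 1 2) (-2)
          + MvPowerSeries.monomial (Finsupp.single 0 4 + Finsupp.single 1 0) 2, ?_, ?_⟩ <;>
        rw [sub2_add, sub2_add, sub2_monomial _ _ hc1 hc2, sub2_monomial _ _ hc1 hc2,
          sub2_monomial _ _ hc1 hc2, sub2_monomial _ _ hc1 hc2,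
          show (C 3 * (φ₁ ^ 0 * φ₂ ^ 3) + C (-3) * (φ₁ ^ 3 * φ₂ ^ 1)) * derivativeFun φ₁
              + (C (-2) * (φ₁ ^ 1 * φ₂ ^ 2) + C 2 * (φ₁ ^ 4 * φ₂ ^ 0)) * derivativeFun φ₂
            = (φ₂ ^ 2 - φ₁ ^ 3)
              * (C 3 * φ₂ * derivativeFun φ₁ + C (-2) * φ₁ * derivativeFun φ₂)
            from by
              simp only [map_neg, map_ofNat]
              ring, hω, hH]
      · exact mul_ne_zero hHne hWne
      · rw [order_mul, hordW, hordH, show 2 * (m + 19) - 3 = 2 * m + 35 from by omega]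
        norm_cast <;> omega
    · -- 2 * v2 + 3
      refine ⟨MvPowerSeries.monomial (Finsupp.single 0 1 + Finsupp.single 1 3) 3
          + MvPowerSeries.monomial (Finsupp.single 0 4 + Finsupp.single 1 1) (-3),
        MvPowerSeries.monomial (Finsupp.single 0 2 + Finsupp.single 1 2) (-2)
          + MvPowerSeries.monomial (Finsupp.single 0 5 + Finsupp.single 1 0) 2, ?_, ?_⟩ <;>
        rw [sub2_add, sub2_add, sub2_monomial _ _ hc1 hc2, sub2_monomial _ _ hc1 hc2,
          sub2_monomial _ _ hc1 hc2, sub2_monomial _ _ hc1 hc2,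
          show (C 3 * (φ₁ ^ 1 * φ₂ ^ 3) + C (-3) * (φ₁ ^ 4 * φ₂ ^ 1)) * derivativeFun φ₁
              + (C (-2) * (φ₁ ^ 2 * φ₂ ^ 2) + C 2 * (φ₁ ^ 5 * φ₂ ^ 0)) * derivativeFun φ₂
            = φ₁ * ((φ₂ ^ 2 - φ₁ ^ 3)
              * (C 3 * φ₂ * derivativeFun φ₁ + C (-2) * φ₁ * derivativeFun φ₂))
            from by
              simp only [map_neg, map_ofNat]
              ring, hω, hH, hφ₁']
      · exact mul_ne_zero hX6ne (mul_ne_zero hHne hWne)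
      · rw [order_mul, order_mul, hordW, hordH, hordX6]
        norm_cast <;> omega
  · -- non-membership part
    have key : ∀ n : ℕ, n ∈ AddSubmonoid.closure ({6, 9, v2} : Set ℕ) →
        ∃ p q r : ℕ, n = p * 6 + q * 9 + r * v2 := by
      intro n hn
      induction hn using AddSubmonoid.closure_induction with
      | mem w hw =>
        rcases hw with rfl | rfl | rfl
        · exact ⟨1, 0, 0, by ring⟩
        · exact ⟨0, 1, 0, by ring⟩
        · exact ⟨0, 0, 1, by ring⟩
      | zero => exact ⟨0, 0, 0, by ring⟩
      | add x y _ _ hx hy =>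
        obtain ⟨p, q, r, rfl⟩ := hx
        obtain ⟨p', q', r', rfl⟩ := hy
        exact ⟨p + p', q + q', r + r', by ring⟩
    have notmem : ∀ n : ℕ, (n = v2 - 3 ∨ n = v2 + 3 ∨ n = 2 * v2 - 3 ∨ n = 2 * v2 + 3) →
        n ∉ AddSubmonoid.closure ({6, 9, v2} : Set ℕ) := by
      intro n hn hmem
      obtain ⟨p, q, r, hpqr⟩ := key n hmem
      rcases Nat.lt_or_ge r 5 with hr | hr
      · interval_cases r <;> omega
      · have h5 : 5 * v2 ≤ r * v2 := Nat.mul_le_mul_right _ hr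
        have hbig : 5 * v2 ≤ n := by omega
        omega
    exact ⟨notmem _ (Or.inl rfl), notmem _ (Or.inr (Or.inl rfl)),
      notmem _ (Or.inr (Or.inr (Or.inl rfl))), notmem _ (Or.inr (Or.inr (Or.inr rfl)))⟩
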